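/- The kernel (over ℤ) of the linear map sending an I×J integer matrix to its vector of row sums and column sums is generated, as a ℤ-module, by the basic moves of all 2×2 minors. -/

import Mathlib

def basicMove {I J : ℕ} (i1 i2 : Fin I) (j1 j2 : Fin J) : Fin I × Fin J → ℤ :=
  fun p => (if p = (i1, j1) then 1 else 0) + (if p = (i2, j2) then 1 else 0)
    - (if p = (i1, j2) then 1 else 0) - (if p = (i2, j1) then 1 else 0)

private lemma sum_delta_row {I J : ℕ} (i a : Fin I) (b : Fin J) :
    ∑ j, (if (i, j) = (a, b) then (1:ℤ) else 0) = if i = a then 1 else 0 := by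
  rcases eq_or_ne i a with rfl | h
  · simp [Prod.ext_iff]
  · simp [Prod.ext_iff, h]

private lemma sum_delta_col {I J : ℕ} (j b : Fin J) (a : Fin I) :
    ∑ i, (if (i, j) = (a, b) then (1:ℤ) else 0) = if j = b then 1 else 0 := by
  rcases eq_or_ne j b with rfl | h
  · simp [Prod.ext_iff]
  · simp [Prod.ext_iff, h]

private lemma bm_row {I J : ℕ} (i1 i2 : Fin I) (j1 j2 : Fin J) (i : Fin I) :
    ∑ j, basicMove i1 i2 j1 j2 (i, j) = 0 := by
  simp only [basicMove, Finset.sum_sub_distrib, Finset.sum_add_distrib,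
    sum_delta_row]
  ring

private lemma bm_col {I J : ℕ} (i1 i2 : Fin I) (j1 j2 : Fin J) (j : Fin J) :
    ∑ i, basicMove i1 i2 j1 j2 (i, j) = 0 := by
  simp only [basicMove, Finset.sum_sub_distrib, Finset.sum_add_distrib,
    sum_delta_col]
  ring

private lemma exists_pos_of_sum_zero {k : ℕ} (f : Fin k → ℤ) (h0 : ∑ j, f j = 0)
    (j0 : Fin k) (hneg : f j0 < 0) : ∃ j, 0 < f j := by
  by_contra h
  push_neg at h
  have : ∑ j, f j < ∑ _j : Fin k, (0:ℤ) :=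
    Finset.sum_lt_sum (fun j _ => h j) ⟨j0, Finset.mem_univ _, hneg⟩
  simp [h0] at this

private lemma exists_neg_of_sum_zero {k : ℕ} (f : Fin k → ℤ) (h0 : ∑ j, f j = 0)
    (j0 : Fin k) (hpos : 0 < f j0) : ∃ j, f j < 0 := by
  obtain ⟨j, hj⟩ := exists_pos_of_sum_zero (fun j => -f j) (by simp [h0]) j0 (by show -f j0 < 0; omega)
  exact ⟨j, by omega⟩

private def marginsKer (I J : ℕ) : Submodule ℤ (Fin I × Fin J → ℤ) where
  carrier := {n | (∀ i, ∑ j, n (i, j) = 0) ∧ (∀ j, ∑ i, n (i, j) = 0)}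
  add_mem' := by
    rintro a b ⟨ha1, ha2⟩ ⟨hb1, hb2⟩
    refine ⟨fun x => ?_, fun x => ?_⟩ <;>
      simp [Finset.sum_add_distrib, ha1 _, ha2 _, hb1 _, hb2 _]
  zero_mem' := by simp
  smul_mem' := by
    rintro c a ⟨ha1, ha2⟩
    refine ⟨fun x => ?_, fun x => ?_⟩ <;>
      simp [← Finset.mul_sum, ha1 _, ha2 _]

private lemma mem_span_of_margins {I J : ℕ} (N : ℕ) :
    ∀ n : Fin I × Fin J → ℤ, (∑ p, (n p).natAbs) ≤ N →
      (∀ i, ∑ j, n (i, j) = 0) → (∀ j, ∑ i, n (i, j) = 0) →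
      n ∈ Submodule.span ℤ
        {m : Fin I × Fin J → ℤ | ∃ (i1 i2 : Fin I) (j1 j2 : Fin J),
          i1 ≠ i2 ∧ j1 ≠ j2 ∧ m = basicMove i1 i2 j1 j2} := by
  induction N using Nat.strong_induction_on with
  | _ N ih =>
    intro n hN hrow hcol
    by_cases hz : n = 0
    · subst hz; exact zero_mem _
    · -- find a positive entry
      obtain ⟨p, hp⟩ : ∃ p, n p ≠ 0 := Function.ne_iff.mp hz
      obtain ⟨i1, j1, h1⟩ : ∃ i1 j1, 0 < n (i1, j1) := by
        rcases lt_or_gt_of_ne hp with hneg | hpos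
        · obtain ⟨j, hj⟩ := exists_pos_of_sum_zero (fun j => n (p.1, j))
            (hrow p.1) p.2 (by simpa using hneg)
          exact ⟨p.1, j, hj⟩
        · exact ⟨p.1, p.2, by simpa using hpos⟩
      obtain ⟨j2, h2⟩ : ∃ j2, n (i1, j2) < 0 :=
        exists_neg_of_sum_zero (fun j => n (i1, j)) (hrow i1) j1 h1
      obtain ⟨i2, h3⟩ : ∃ i2, 0 < n (i2, j2) :=
        exists_pos_of_sum_zero (fun i => n (i, j2)) (hcol j2) i1 h2
      have hj : j1 ≠ j2 := by rintro rfl; omega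
      have hi : i1 ≠ i2 := by rintro rfl; omega
      set m := basicMove i1 i2 j1 j2 with hm_def
      have hm : m ∈ Submodule.span ℤ
          {m : Fin I × Fin J → ℤ | ∃ (i1 i2 : Fin I) (j1 j2 : Fin J),
            i1 ≠ i2 ∧ j1 ≠ j2 ∧ m = basicMove i1 i2 j1 j2} :=
        Submodule.subset_span ⟨i1, i2, j1, j2, hi, hj, rfl⟩
      set n' : Fin I × Fin J → ℤ := n - m with hn'_def
      have hn'row : ∀ i, ∑ j, n' (i, j) = 0 := by
        intro i
        simp [hn'_def, hm_def, Finset.sum_sub_distrib, hrow i, bm_row]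
      have hn'col : ∀ j, ∑ i, n' (i, j) = 0 := by
        intro j
        simp [hn'_def, hm_def, Finset.sum_sub_distrib, hcol j, bm_col]
      -- the decrease
      have hA_ne12 : ((i1, j1) : Fin I × Fin J) ≠ (i2, j2) := by
        simp [Prod.ext_iff, hi]
      have key : (∑ p, (n' p).natAbs) < ∑ p, (n p).natAbs := by
        classical
        set A : Finset (Fin I × Fin J) := {(i1, j1), (i2, j2), (i1, j2), (i2, j1)} with hA
        have houter : ∑ p ∈ Finset.univ \ A, (n' p).natAbs
            = ∑ p ∈ Finset.univ \ A, (n p).natAbs := by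
          refine Finset.sum_congr rfl fun p hpmem => ?_
          simp only [Finset.mem_sdiff, hA, Finset.mem_insert, Finset.mem_singleton] at hpmem
          push_neg at hpmem
          obtain ⟨-, e1, e2, e3, e4⟩ := hpmem
          simp [hn'_def, hm_def, basicMove, e1, e2, e3, e4]
        have hsum : ∀ f : Fin I × Fin J → ℕ,
            ∑ p, f p = ∑ p ∈ Finset.univ \ A, f p + ∑ p ∈ A, f p :=
          fun f => (Finset.sum_sdiff (Finset.subset_univ A)).symm
        have hAsum : ∀ g : Fin I × Fin J → ℕ,
            ∑ p ∈ A, g p = g (i1, j1) + g (i2, j2) + g (i1, j2) + g (i2, j1) := by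
          intro g
          have hA4 : ((i1,j2) : Fin I × Fin J) ∉ ({(i2,j1)} : Finset _) := by
            simp [Prod.ext_iff, hi]
          have hA3 : ((i2,j2) : Fin I × Fin J) ∉ ({(i1,j2),(i2,j1)} : Finset _) := by
            simp [Prod.ext_iff, hi.symm, hj.symm]
          have hA2 : ((i1,j1) : Fin I × Fin J) ∉
              (insert (i2,j2) {(i1,j2),(i2,j1)} : Finset _) := by
            simp [Prod.ext_iff, hi, hj]
          have : A = insert (i1,j1) (insert (i2,j2) (insert (i1,j2) {(i2,j1)})) := rfl
          rw [this, Finset.sum_insert hA2, Finset.sum_insert hA3, Finset.sum_insert hA4,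
            Finset.sum_singleton]
          omega
        have v1 : n' (i1, j1) = n (i1, j1) - 1 := by
          simp [hn'_def, hm_def, basicMove, Prod.ext_iff, hi, hj]
        have v2 : n' (i2, j2) = n (i2, j2) - 1 := by
          simp [hn'_def, hm_def, basicMove, Prod.ext_iff, hi.symm, hj.symm]
        have v3 : n' (i1, j2) = n (i1, j2) + 1 := by
          simp [hn'_def, hm_def, basicMove, Prod.ext_iff, hi, hj.symm]
        have v4 : n' (i2, j1) = n (i2, j1) + 1 := by
          simp [hn'_def, hm_def, basicMove, Prod.ext_iff, hi.symm, hj]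
        rw [hsum (fun p => (n' p).natAbs), hsum (fun p => (n p).natAbs), houter,
          hAsum, hAsum, v1, v2, v3, v4]
        omega
      have hn'mem := ih _ (lt_of_lt_of_le key hN) n' le_rfl hn'row hn'col
      have : n = n' + m := by simp [hn'_def]
      rw [this]
      exact Submodule.add_mem _ hn'mem hm

/-- The kernel of the map sending an integer matrix to its row and column sums is
spanned over ℤ by the basic moves of all 2×2 minors. -/
theorem ker_margins_eq_span_basicMoves {I J : ℕ} (n : Fin I × Fin J → ℤ) :
    ((∀ i : Fin I, ∑ j, n (i, j) = 0) ∧ (∀ j : Fin J, ∑ i, n (i, j) = 0)) ↔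
      n ∈ Submodule.span ℤ
        {m : Fin I × Fin J → ℤ | ∃ (i1 i2 : Fin I) (j1 j2 : Fin J),
          i1 ≠ i2 ∧ j1 ≠ j2 ∧ m = basicMove i1 i2 j1 j2} := by
  constructor
  · rintro ⟨hrow, hcol⟩
    exact mem_span_of_margins _ n le_rfl hrow hcol
  · intro h
    have hle : Submodule.span ℤ
        {m : Fin I × Fin J → ℤ | ∃ (i1 i2 : Fin I) (j1 j2 : Fin J),
          i1 ≠ i2 ∧ j1 ≠ j2 ∧ m = basicMove i1 i2 j1 j2} ≤ marginsKer I J := by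
      rw [Submodule.span_le]
      rintro m ⟨i1, i2, j1, j2, hi, hj, rfl⟩
      exact ⟨bm_row i1 i2 j1 j2, bm_col i1 i2 j1 j2⟩
    exact hle h
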